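/- Let η be a continuous algebra homomorphism from C(X,A) to C(X,A), and define τ : C(X,A) → C(X,A) by τ(f)(x) = η(1_{f(x)})(x) for f ∈ C(X,A) and x ∈ X. Then τ is a continuous algebra homomorphism on C(X,A) and satisfies T_x ∘ τ = τ̃_x ∘ T_x for all x ∈ X. -/

import Mathlib

/-- given `η ∈ Hom(C(X,A))`, the formula `τ(f)(x) = η(1_{f(x)})(x)`
defines a continuous algebra homomorphism `τ` on `C(X,A)` (in particular each
`τ(f)` is continuous, i.e. `τ(f) ∈ C(X,A)`), and `T_x ∘ τ = τ̃_x ∘ T_x` for all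
`x ∈ X`, i.e. `τ(f)(x) = τ(1_{f(x)})(x)`. -/
theorem stmt6 {X A : Type*} [TopologicalSpace X] [CompactSpace X] [T2Space X]
    [NonUnitalNormedRing A] [NormedSpace ℂ A] [IsScalarTower ℂ A A]
    [SMulCommClass ℂ A A] [CompleteSpace A]
    (η : C(X, A) →L[ℂ] C(X, A)) (hη : ∀ f g : C(X, A), η (f * g) = η f * η g) :
    ∃ τ : C(X, A) → C(X, A),
      (∀ (f : C(X, A)) (x : X), τ f x = η (ContinuousMap.const X (f x)) x) ∧
      Continuous τ ∧
      (∀ f g : C(X, A), τ (f + g) = τ f + τ g) ∧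
      (∀ (c : ℂ) (f : C(X, A)), τ (c • f) = c • τ f) ∧
      (∀ f g : C(X, A), τ (f * g) = τ f * τ g) ∧
      (∀ (f : C(X, A)) (x : X), τ f x = τ (ContinuousMap.const X (f x)) x) := by
  have hc : ∀ f : C(X, A), Continuous fun x => η (ContinuousMap.const X (f x)) x := by
    intro f
    have h1 : Continuous fun x => η (ContinuousMap.const X (f x)) :=
      η.continuous.comp (ContinuousMap.continuous_const'.comp f.continuous)
    exact ContinuousEval.continuous_eval.comp (h1.prodMk continuous_id)
  refine ⟨fun f => ⟨_, hc f⟩, fun f x => rfl, ?_, ?_, ?_, ?_, ?_⟩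
  · -- continuity: Lipschitz with constant ‖η‖
    have key : ∀ f g : C(X, A), dist (⟨_, hc f⟩ : C(X, A)) ⟨_, hc g⟩ ≤ ‖η‖ * dist f g := by
      intro f g
      refine ContinuousMap.dist_le (by positivity) |>.2 fun x => ?_
      have h1 : ContinuousMap.const X (f x) - ContinuousMap.const X (g x)
          = ContinuousMap.const X (f x - g x) := by ext y; rfl
      calc dist (η (ContinuousMap.const X (f x)) x) (η (ContinuousMap.const X (g x)) x)
          = ‖(η (ContinuousMap.const X (f x)) - η (ContinuousMap.const X (g x))) x‖ := by
            simp [dist_eq_norm]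
        _ = ‖η (ContinuousMap.const X (f x - g x)) x‖ := by rw [← map_sub, h1]
        _ ≤ ‖η (ContinuousMap.const X (f x - g x))‖ := ContinuousMap.norm_coe_le_norm _ x
        _ ≤ ‖η‖ * ‖ContinuousMap.const X (f x - g x)‖ := η.le_opNorm _
        _ ≤ ‖η‖ * ‖f x - g x‖ := by
            gcongr
            exact (ContinuousMap.norm_le _ (norm_nonneg _)).2 fun y => le_rfl
        _ = ‖η‖ * dist (f x) (g x) := by rw [dist_eq_norm]
        _ ≤ ‖η‖ * dist f g := by
            gcongr
            exact ContinuousMap.dist_apply_le_dist x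
    exact (LipschitzWith.of_dist_le_mul (K := ‖η‖₊) (by simpa using key)).continuous
  · intro f g
    ext x
    have : ContinuousMap.const X (f x + g x)
        = ContinuousMap.const X (f x) + ContinuousMap.const X (g x) := by ext y; rfl
    simp only [ContinuousMap.coe_mk, ContinuousMap.add_apply]
    rw [this, map_add]; rfl
  · intro c f
    ext x
    have : ContinuousMap.const X (c • f x) = c • ContinuousMap.const X (f x) := by
      ext y; simp
    simp only [ContinuousMap.coe_mk, ContinuousMap.smul_apply]
    rw [this, map_smul]; rfl
  · intro f g
    ext x
    have : ContinuousMap.const X (f x * g x)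
        = ContinuousMap.const X (f x) * ContinuousMap.const X (g x) := by ext y; rfl
    simp only [ContinuousMap.coe_mk, ContinuousMap.mul_apply]
    rw [this, hη]; rfl
  · intro f x
    rfl
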